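/- Let n ≥ 1 and ε ∈ (0, e^{-1}]. Suppose D₀, D₁, D₂, ... are measurable subsets of ℝ^n such that D_{k+1} ⊆ ⋃_v T_v D_k, where the union is over the 3^n translation vectors v with coordinates in {0, ε, -ε} and T_v is translation by v. Let p : ℝ^n → [1,∞) be defined by p(x) = Π_j max(1, |x_j|). Then for all k ≥ 0, ∫_{D_k} p(x) dx ≤ R^k ∫_{D₀} p(x) dx, where R = (3(1+e^{-1}))^n. -/

import Mathlib

open MeasureTheory Real
open scoped ENNReal

theorem stmt15 (n : ℕ) (hn : 1 ≤ n) (ε : ℝ) (hε : 0 < ε) (hε1 : ε ≤ (Real.exp 1)⁻¹)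
    (D : ℕ → Set (Fin n → ℝ)) (hD : ∀ k, MeasurableSet (D k))
    (hsub : ∀ k, D (k + 1) ⊆
      ⋃ v ∈ {v : Fin n → ℝ | ∀ j, v j = 0 ∨ v j = ε ∨ v j = -ε},
        (fun x => x + v) '' D k) :
    ∀ k, (∫⁻ x in D k, ENNReal.ofReal (∏ j, max 1 |x j|)) ≤
      ENNReal.ofReal ((3 * (1 + (Real.exp 1)⁻¹)) ^ n) ^ k *
        ∫⁻ x in D 0, ENNReal.ofReal (∏ j, max 1 |x j|) := by
  set p : (Fin n → ℝ) → ℝ≥0∞ := fun x => ENNReal.ofReal (∏ j, max 1 |x j|) with hp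
  have hpm : Measurable p := by
    apply Measurable.ennreal_ofReal
    exact Finset.measurable_prod _ fun j _ => measurable_const.max (measurable_pi_apply j).abs
  set b : ℝ := (Real.exp 1)⁻¹ with hb
  have hb0 : 0 ≤ b := le_of_lt (by positivity)
  set C : ℝ≥0∞ := ENNReal.ofReal ((3 * (1 + b)) ^ n) with hC
  set S : Finset (Fin n → ℝ) := Fintype.piFinset (fun _ => ({0, ε, -ε} : Finset ℝ)) with hS
  have hScard : S.card ≤ 3 ^ n := by
    rw [hS, Fintype.card_piFinset]
    calc ∏ _j : Fin n, ({0, ε, -ε} : Finset ℝ).card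
        ≤ ∏ _j : Fin n, 3 := by
          apply Finset.prod_le_prod'
          intro j _
          exact (Finset.card_insert_le _ _).trans
            (Nat.succ_le_succ ((Finset.card_insert_le _ _).trans (by simp)))
      _ = 3 ^ n := by simp
  -- key single-step estimate
  have key : ∀ k, (∫⁻ x in D (k+1), p x) ≤ C * ∫⁻ x in D k, p x := by
    intro k
    set μ : Measure (Fin n → ℝ) := volume.withDensity p with hμ
    have hμs : ∀ s : Set (Fin n → ℝ), MeasurableSet s → μ s = ∫⁻ x in s, p x := by
      intro s hs; rw [hμ, withDensity_apply p hs]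
    -- each translated integral bound
    have hterm : ∀ v ∈ S, μ ((fun x => x + v) '' D k) ≤
        ENNReal.ofReal ((1 + b) ^ n) * ∫⁻ x in D k, p x := by
      intro v hv
      have hvb : ∀ j, |v j| ≤ b := by
        intro j
        have := Fintype.mem_piFinset.1 hv j
        simp only [Finset.mem_insert, Finset.mem_singleton] at this
        rcases this with h | h | h <;> rw [h] <;> simp [abs_of_pos hε, abs_of_neg (neg_neg_iff_pos.2 hε), hε1, hb0]
      have hemb : MeasurableEmbedding (fun x : Fin n → ℝ => x + v) :=
        (MeasurableEquiv.addRight v).measurableEmbedding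
      have himg : MeasurableSet ((fun x => x + v) '' D k) :=
        hemb.measurableSet_image.2 (hD k)
      rw [hμs _ himg,
        ← (measurePreserving_add_right volume v).setLIntegral_comp_emb hemb p (D k)]
      have hpt : ∀ x : Fin n → ℝ, p (x + v) ≤ ENNReal.ofReal ((1 + b) ^ n) * p x := by
        intro x
        have hfac : ∀ j, max 1 |(x + v) j| ≤ (1 + b) * max 1 |x j| := by
          intro j
          have h1 : (1 : ℝ) ≤ max 1 |x j| := le_max_left _ _
          have h2 : |x j + v j| ≤ max 1 |x j| + b :=
            (abs_add_le _ _).trans (add_le_add (le_max_right _ _) (hvb j))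
          have : max 1 |(x + v) j| = max 1 |x j + v j| := by simp [Pi.add_apply]
          rw [this]
          apply max_le
          · nlinarith
          · nlinarith
        have hprod : (∏ j, max 1 |(x + v) j|) ≤ (1 + b) ^ n * ∏ j, max 1 |x j| := by
          calc (∏ j, max 1 |(x + v) j|) ≤ ∏ j, (1 + b) * max 1 |x j| := by
                apply Finset.prod_le_prod
                · intro j _; positivity
                · intro j _; exact hfac j
            _ = (1 + b) ^ n * ∏ j, max 1 |x j| := by
                rw [Finset.prod_mul_distrib, Finset.prod_const]
                simp
        calc p (x + v) ≤ ENNReal.ofReal ((1 + b) ^ n * ∏ j, max 1 |x j|) :=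
              ENNReal.ofReal_le_ofReal hprod
          _ = ENNReal.ofReal ((1 + b) ^ n) * p x := by
              rw [ENNReal.ofReal_mul (by positivity)]
      calc (∫⁻ x in D k, p (x + v)) ≤ ∫⁻ x in D k, ENNReal.ofReal ((1 + b) ^ n) * p x :=
            lintegral_mono fun x => hpt x
        _ = ENNReal.ofReal ((1 + b) ^ n) * ∫⁻ x in D k, p x :=
            lintegral_const_mul' _ _ ENNReal.ofReal_ne_top
    have hUeq : D (k + 1) ⊆ ⋃ v ∈ S, (fun x => x + v) '' D k := by
      refine (hsub k).trans ?_
      apply Set.iUnion₂_subset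
      intro v hv
      have hv' : v ∈ S := by
        rw [hS, Fintype.mem_piFinset]
        intro j
        simp only [Finset.mem_insert, Finset.mem_singleton]
        exact hv j
      exact Set.subset_iUnion₂ (s := fun v _ => (fun x => x + v) '' D k) v hv'
    calc (∫⁻ x in D (k+1), p x) = μ (D (k+1)) := (hμs _ (hD _)).symm
      _ ≤ μ (⋃ v ∈ S, (fun x => x + v) '' D k) := measure_mono hUeq
      _ ≤ ∑ v ∈ S, μ ((fun x => x + v) '' D k) := measure_biUnion_finset_le _ _
      _ ≤ ∑ _v ∈ S, ENNReal.ofReal ((1 + b) ^ n) * ∫⁻ x in D k, p x :=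
          Finset.sum_le_sum hterm
      _ = (S.card : ℝ≥0∞) * (ENNReal.ofReal ((1 + b) ^ n) * ∫⁻ x in D k, p x) := by
          rw [Finset.sum_const, nsmul_eq_mul]
      _ ≤ ((3 ^ n : ℕ) : ℝ≥0∞) * (ENNReal.ofReal ((1 + b) ^ n) * ∫⁻ x in D k, p x) :=
          mul_le_mul_left (Nat.cast_le.2 hScard) _
      _ = C * ∫⁻ x in D k, p x := by
          rw [hC, mul_pow, ENNReal.ofReal_mul (by positivity), ← mul_assoc]
          congr 1
          rw [show ((3:ℝ)^n) = ((3^n : ℕ) : ℝ) by push_cast; ring,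
            ENNReal.ofReal_natCast]
  intro k
  induction k with
  | zero => simp
  | succ k ih =>
      calc (∫⁻ x in D (k+1), p x) ≤ C * ∫⁻ x in D k, p x := key k
        _ ≤ C * (C ^ k * ∫⁻ x in D 0, p x) := mul_le_mul_right ih _
        _ = C ^ (k+1) * ∫⁻ x in D 0, p x := by rw [pow_succ, mul_comm (C^k) C, mul_assoc]
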